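/- Let p ≥ 0 and c > 0, and define f_{1/2}(v) := v (1 + 2 ln v)^{−1/2} for v ≥ 1. Then there exists a constant K > 0 such that for every t ≥ 1, ∫_1^∞ (1/v) ( log(1+2v) )^{p+1} · 1{ t > c f_{1/2}(v) } dv ≤ K ( log(1+t) )^{p+2}. -/
import Mathlib

open MeasureTheory Set

/-- The auxiliary function `f_{1/2}(v) = v (1 + 2 ln v)^{-1/2}`. -/
noncomputable def fHalf (v : ℝ) : ℝ := v * (1 + 2 * Real.log v) ^ (-(1 / 2 : ℝ))

lemma fHalf_ge_sqrt {v : ℝ} (hv : 1 ≤ v) : Real.sqrt (v / 2) ≤ fHalf v := by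
  have hv0 : 0 < v := lt_of_lt_of_le one_pos hv
  have hlog : 0 ≤ Real.log v := Real.log_nonneg hv
  have hL0 : (0:ℝ) < 1 + 2 * Real.log v := by linarith
  have hL2v : 1 + 2 * Real.log v ≤ 2 * v := by
    have := Real.log_le_sub_one_of_pos hv0; linarith
  have h1 : fHalf v = v / Real.sqrt (1 + 2 * Real.log v) := by
    rw [fHalf, Real.rpow_neg hL0.le, ← Real.sqrt_eq_rpow]
    ring
  rw [h1, le_div_iff₀ (Real.sqrt_pos.mpr hL0), ← Real.sqrt_mul (by positivity)]
  have h2 : v / 2 * (1 + 2 * Real.log v) ≤ v ^ 2 := by nlinarith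
  calc Real.sqrt (v / 2 * (1 + 2 * Real.log v)) ≤ Real.sqrt (v ^ 2) := Real.sqrt_le_sqrt h2
    _ = v := by rw [Real.sqrt_sq hv0.le]

set_option maxHeartbeats 1000000 in
/-- Let `p ≥ 0` and `c > 0`. There is a constant `K > 0` such that for every `t ≥ 1`,
`∫_1^∞ (1/v) (log(1+2v))^{p+1} 1{t > c f_{1/2}(v)} dv ≤ K (log(1+t))^{p+2}`. -/
theorem single_integral_log_bound (p : ℝ) (hp : 0 ≤ p) (c : ℝ) (hc : 0 < c) :
    ∃ K : ℝ, 0 < K ∧ ∀ t : ℝ, 1 ≤ t →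
      (∫⁻ v in Set.Ioi (1 : ℝ),
        ENNReal.ofReal
          (if c * fHalf v < t then (1 / v) * Real.log (1 + 2 * v) ^ (p + 1) else 0)) ≤
        ENNReal.ofReal (K * Real.log (1 + t) ^ (p + 2)) := by
  have hd : (0:ℝ) < 4 / c ^ 2 := by positivity
  set A : ℝ := Real.log (5 + 4 / c ^ 2) / Real.log 2 + 2 with hAdef
  have hlog2 : (0:ℝ) < Real.log 2 := Real.log_pos one_lt_two
  have hlog5 : 0 < Real.log (5 + 4 / c ^ 2) := Real.log_pos (by linarith)
  have hA : 0 < A := by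
    have : 0 ≤ Real.log (5 + 4 / c ^ 2) / Real.log 2 := by positivity
    rw [hAdef]; linarith
  refine ⟨A ^ (p + 2), Real.rpow_pos_of_pos hA _, fun t ht => ?_⟩
  have ht0 : (0:ℝ) < t := lt_of_lt_of_le one_pos ht
  set V : ℝ := 2 * t ^ 2 / c ^ 2 + 2 with hVdef
  have hVpos : 0 < 2 * t ^ 2 / c ^ 2 := by positivity
  have hV1 : (1:ℝ) < V := by rw [hVdef]; linarith
  set x : ℝ := Real.log (1 + 2 * V) with hxdef
  have hx1 : (1:ℝ) < x := by
    rw [hxdef]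
    have h3 : Real.exp 1 < 1 + 2 * V := by
      have := Real.exp_one_lt_d9; nlinarith
    calc (1:ℝ) = Real.log (Real.exp 1) := (Real.log_exp 1).symm
      _ < Real.log (1 + 2 * V) := Real.log_lt_log (Real.exp_pos 1) h3
  set B : ℝ := x ^ (p + 1) with hBdef
  have hB0 : 0 ≤ B := Real.rpow_nonneg (by linarith) _
  -- pointwise bound
  have key : ∀ v ∈ Ioi (1:ℝ),
      ENNReal.ofReal (if c * fHalf v < t then (1 / v) * Real.log (1 + 2 * v) ^ (p + 1) else 0)
        ≤ (Ioo (1:ℝ) V).indicator (fun v => ENNReal.ofReal (B * (1 / v))) v := by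
    intro v hv
    simp only [mem_Ioi] at hv
    by_cases h : c * fHalf v < t
    · have hvV : v < V := by
        have h1 : c * Real.sqrt (v / 2) ≤ c * fHalf v :=
          mul_le_mul_of_nonneg_left (fHalf_ge_sqrt hv.le) hc.le
        have h2 : c * Real.sqrt (v / 2) < t := lt_of_le_of_lt h1 h
        have h3 : c ^ 2 * (v / 2) < t ^ 2 := by
          have hnn : (0:ℝ) ≤ c * Real.sqrt (v / 2) := by positivity
          have h4 : (c * Real.sqrt (v / 2)) ^ 2 < t ^ 2 := by nlinarith
          rwa [mul_pow, Real.sq_sqrt (by positivity)] at h4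
        have h5 : v < 2 * t ^ 2 / c ^ 2 := by
          rw [lt_div_iff₀ (by positivity : (0:ℝ) < c ^ 2)]
          nlinarith
        rw [hVdef]; linarith
      rw [if_pos h, indicator_of_mem (mem_Ioo.mpr ⟨hv, hvV⟩)]
      apply ENNReal.ofReal_le_ofReal
      rw [mul_comm B]
      apply mul_le_mul_of_nonneg_left _ (by positivity)
      have hlogle : Real.log (1 + 2 * v) ≤ x := by
        rw [hxdef]
        apply Real.log_le_log (by linarith)
        linarith
      calc Real.log (1 + 2 * v) ^ (p + 1) ≤ x ^ (p + 1) :=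
            Real.rpow_le_rpow (Real.log_nonneg (by linarith)) hlogle (by linarith)
        _ = B := hBdef.symm
    · rw [if_neg h]
      simp
  -- integrability
  have hcont : ContinuousOn (fun v : ℝ => B * (1 / v)) (Icc 1 V) := by
    apply continuousOn_const.mul
    apply continuousOn_const.div continuousOn_id
    intro v hv
    have h1 := hv.1
    simp only [id_eq]
    intro h0
    rw [h0] at h1; linarith
  have hint : IntegrableOn (fun v : ℝ => B * (1 / v)) (Ioo (1:ℝ) V) :=
    (hcont.integrableOn_Icc).mono_set Ioo_subset_Icc_self
  -- value of the integral
  have hval : ∫ v in Ioo (1:ℝ) V, B * (1 / v) = B * Real.log V := by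
    rw [MeasureTheory.integral_const_mul]
    congr 1
    rw [← MeasureTheory.integral_Ioc_eq_integral_Ioo,
      ← intervalIntegral.integral_of_le hV1.le]
    rw [integral_one_div, div_one]
    rw [uIcc_of_le hV1.le]
    intro h0
    exact absurd h0.1 (by norm_num)
  -- final numeric bound
  have hfinal : B * Real.log V ≤ A ^ (p + 2) * Real.log (1 + t) ^ (p + 2) := by
    have hlogV : Real.log V ≤ x := by
      rw [hxdef]
      apply Real.log_le_log (by linarith)
      linarith
    have h1 : B * Real.log V ≤ x ^ (p + 2) := by
      have h2 : B * Real.log V ≤ B * x := by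
        apply mul_le_mul_of_nonneg_left hlogV hB0
      have h3 : B * x = x ^ (p + 2) := by
        rw [hBdef, ← Real.rpow_add_one (by linarith : x ≠ 0) (p + 1)]
        congr 1
        ring
      linarith
    have hlogt : Real.log 2 ≤ Real.log (1 + t) :=
      Real.log_le_log (by norm_num) (by linarith)
    have hlogt0 : 0 < Real.log (1 + t) := lt_of_lt_of_le hlog2 hlogt
    have hxA : x ≤ A * Real.log (1 + t) := by
      have hhs : 1 + 2 * V = 5 + (4 / c ^ 2) * t ^ 2 := by
        rw [hVdef]; field_simp; ring
      have hle : 1 + 2 * V ≤ (5 + 4 / c ^ 2) * (1 + t) ^ 2 := by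
        rw [hhs]
        have h6 : t ^ 2 ≤ (1 + t) ^ 2 := by nlinarith
        have h7 : (1:ℝ) ≤ (1 + t) ^ 2 := by nlinarith
        nlinarith
      have h8 : x ≤ Real.log ((5 + 4 / c ^ 2) * (1 + t) ^ 2) := by
        rw [hxdef]
        exact Real.log_le_log (by linarith) hle
      have h9 : Real.log ((5 + 4 / c ^ 2) * (1 + t) ^ 2)
          = Real.log (5 + 4 / c ^ 2) + 2 * Real.log (1 + t) := by
        have ha : (5 + 4 / c ^ 2 : ℝ) ≠ 0 := by positivity
        have hb : ((1 + t) ^ 2 : ℝ) ≠ 0 := by positivity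
        rw [Real.log_mul ha hb, Real.log_pow]
        push_cast; ring
      have h10 : Real.log (5 + 4 / c ^ 2)
          ≤ (Real.log (5 + 4 / c ^ 2) / Real.log 2) * Real.log (1 + t) := by
        rw [div_mul_eq_mul_div, le_div_iff₀ hlog2]
        have : 0 ≤ Real.log (5 + 4 / c ^ 2) := hlog5.le
        nlinarith
      rw [hAdef]
      calc x ≤ Real.log (5 + 4 / c ^ 2) + 2 * Real.log (1 + t) := by rw [← h9]; exact h8
        _ ≤ (Real.log (5 + 4 / c ^ 2) / Real.log 2) * Real.log (1 + t)
              + 2 * Real.log (1 + t) := by linarith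
        _ = (Real.log (5 + 4 / c ^ 2) / Real.log 2 + 2) * Real.log (1 + t) := by ring
    calc B * Real.log V ≤ x ^ (p + 2) := h1
      _ ≤ (A * Real.log (1 + t)) ^ (p + 2) :=
          Real.rpow_le_rpow (by linarith) hxA (by linarith)
      _ = A ^ (p + 2) * Real.log (1 + t) ^ (p + 2) :=
          Real.mul_rpow hA.le hlogt0.le
  -- assemble
  calc (∫⁻ v in Ioi (1:ℝ),
        ENNReal.ofReal
          (if c * fHalf v < t then (1 / v) * Real.log (1 + 2 * v) ^ (p + 1) else 0))
      ≤ ∫⁻ v in Ioi (1:ℝ), (Ioo (1:ℝ) V).indicator (fun v => ENNReal.ofReal (B * (1 / v))) v :=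
        setLIntegral_mono' measurableSet_Ioi key
    _ = ∫⁻ v in Ioo (1:ℝ) V, ENNReal.ofReal (B * (1 / v)) := by
        rw [lintegral_indicator measurableSet_Ioo _,
          Measure.restrict_restrict measurableSet_Ioo,
          inter_eq_left.mpr Ioo_subset_Ioi_self]
    _ = ENNReal.ofReal (∫ v in Ioo (1:ℝ) V, B * (1 / v)) := by
        rw [MeasureTheory.ofReal_integral_eq_lintegral_ofReal hint]
        filter_upwards [ae_restrict_mem measurableSet_Ioo] with v hv
        have : (0:ℝ) < v := lt_trans one_pos hv.1
        positivity
    _ ≤ ENNReal.ofReal (A ^ (p + 2) * Real.log (1 + t) ^ (p + 2)) := by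
        rw [hval]
        exact ENNReal.ofReal_le_ofReal hfinal
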